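/- Let E = ℝ^d with the Euclidean inner product, let g : E → ℝ be differentiable with L-Lipschitz gradient ∇g (L > 0), let f : E → ℝ, let F : E × E → ℝ be a tangent majorant of f, let 0 < τ < 1/L, set h = f + g, and assume h(x) ≥ h* for all x ∈ E for some h* ∈ ℝ. Let (x^(n)) be a sequence in E such that for every n, x^(n+1) is a global minimizer of z ↦ F(z, x^(n)) + g(x^(n)) + ⟨z − x^(n), ∇g(x^(n))⟩ + (1/(2τ))‖z − x^(n)‖². Define γ_N = min over 0 ≤ n ≤ N−1 of ‖x^(n+1) − x^(n)‖². Then for every N ≥ 1, γ_N ≤ (1/N) · (h(x^(0)) − h*) / (1/(2τ) − L/2); in particular γ_N tends to 0 as N → ∞ at rate O(1/N). -/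

import Mathlib

open scoped RealInnerProductSpace

section Descent

variable {E : Type*} [NormedAddCommGroup E] [InnerProductSpace ℝ E] [CompleteSpace E]

/-- Descent lemma: quadratic upper bound for a function with Lipschitz gradient. -/
lemma descent_lemma (g : E → ℝ) (L : ℝ)
    (hg : Differentiable ℝ g)
    (hlip : ∀ a b : E, ‖gradient g a - gradient g b‖ ≤ L * ‖a - b‖)
    (x y : E) :
    g y ≤ g x + ⟪gradient g x, y - x⟫ + L / 2 * ‖y - x‖ ^ 2 := by
  set u := y - x with hu
  set ψ : ℝ → ℝ := fun t => g (x + t • u) - t * ⟪gradient g x, u⟫ - L / 2 * t ^ 2 * ‖u‖ ^ 2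
    with hψ
  have hderiv : ∀ t : ℝ, HasDerivAt ψ
      (⟪gradient g (x + t • u), u⟫ - ⟪gradient g x, u⟫ - L * t * ‖u‖ ^ 2) t := by
    intro t
    have hγ : HasDerivAt (fun s : ℝ => x + s • u) u t := by
      simpa using ((hasDerivAt_id t).smul_const u).const_add x
    have hF : HasFDerivAt g (InnerProductSpace.toDual ℝ E (gradient g (x + t • u)))
        (x + t • u) := by
      have := (hg (x + t • u)).hasGradientAt
      rwa [hasGradientAt_iff_hasFDerivAt] at this
    have h1 : HasDerivAt (fun s : ℝ => g (x + s • u)) ⟪gradient g (x + t • u), u⟫ t := by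
      simpa [Function.comp_def] using hF.comp_hasDerivAt t hγ
    have h2 : HasDerivAt (fun s : ℝ => s * ⟪gradient g x, u⟫) ⟪gradient g x, u⟫ t := by
      simpa using (hasDerivAt_id t).mul_const (⟪gradient g x, u⟫ : ℝ)
    have h3 : HasDerivAt (fun s : ℝ => L / 2 * s ^ 2 * ‖u‖ ^ 2) (L * t * ‖u‖ ^ 2) t := by
      have : HasDerivAt (fun s : ℝ => s ^ 2) (2 * t) t := by
        simpa using hasDerivAt_pow 2 t
      have : HasDerivAt (fun s : ℝ => L / 2 * s ^ 2 * ‖u‖ ^ 2) (L / 2 * (2 * t) * ‖u‖ ^ 2) t :=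
        (this.const_mul (L / 2)).mul_const (‖u‖ ^ 2)
      convert this using 1
      ring
    exact (h1.sub h2).sub h3
  have hanti : AntitoneOn ψ (Set.Icc (0 : ℝ) 1) := by
    apply antitoneOn_of_deriv_nonpos (convex_Icc 0 1)
    · exact fun t _ => (hderiv t).continuousAt.continuousWithinAt
    · exact fun t _ => ((hderiv t).differentiableAt).differentiableWithinAt
    · intro t ht
      rw [interior_Icc] at ht
      rw [(hderiv t).deriv]
      have hin : ⟪gradient g (x + t • u) - gradient g x, u⟫ ≤ L * t * ‖u‖ ^ 2 := by
        calc ⟪gradient g (x + t • u) - gradient g x, u⟫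
            ≤ ‖gradient g (x + t • u) - gradient g x‖ * ‖u‖ := real_inner_le_norm _ _
          _ ≤ (L * ‖(x + t • u) - x‖) * ‖u‖ := by
              have := hlip (x + t • u) x
              exact mul_le_mul_of_nonneg_right this (norm_nonneg u)
          _ = L * t * ‖u‖ ^ 2 := by
              have : ‖(x + t • u) - x‖ = t * ‖u‖ := by
                simp [norm_smul, abs_of_pos ht.1]
              rw [this]; ring
      rw [inner_sub_left] at hin
      linarith
  have := hanti (Set.mem_Icc.mpr ⟨le_refl 0, zero_le_one⟩)
    (Set.mem_Icc.mpr ⟨zero_le_one, le_refl 1⟩) zero_le_one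
  simp only [hψ, zero_smul, add_zero, one_smul, zero_pow, one_pow, mul_zero, zero_mul,
    mul_one, one_mul, sub_zero] at this
  have hxy : x + u = y := by rw [hu]; abel
  rw [hxy] at this
  linarith

end Descent

/-- Rate of convergence of the minimal squared residual: with
`γ_N = min_{0 ≤ n ≤ N-1} ‖x (n+1) - x n‖²`, one has
`γ_N ≤ (1/N) (h (x 0) - h*) / (1/(2τ) - L/2)`, and in particular `γ_N → 0`. -/
theorem majorized_fb_residual_rate {d : ℕ}
    (g f : EuclideanSpace ℝ (Fin d) → ℝ)
    (F : EuclideanSpace ℝ (Fin d) × EuclideanSpace ℝ (Fin d) → ℝ)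
    (L τ : ℝ) (hL : 0 < L)
    (hg : Differentiable ℝ g)
    (hlip : ∀ a b : EuclideanSpace ℝ (Fin d),
      ‖gradient g a - gradient g b‖ ≤ L * ‖a - b‖)
    (hmaj : ∀ x xt : EuclideanSpace ℝ (Fin d), f x ≤ F (x, xt))
    (hdiag : ∀ x : EuclideanSpace ℝ (Fin d), F (x, x) = f x)
    (hτ0 : 0 < τ) (hτ : τ < 1 / L)
    (hstar : ℝ) (hbound : ∀ z : EuclideanSpace ℝ (Fin d), hstar ≤ f z + g z)
    (x : ℕ → EuclideanSpace ℝ (Fin d))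
    (hiter : ∀ n : ℕ, ∀ z : EuclideanSpace ℝ (Fin d),
      F (x (n + 1), x n) + g (x n) + ⟪x (n + 1) - x n, gradient g (x n)⟫ +
          (1 / (2 * τ)) * ‖x (n + 1) - x n‖ ^ 2
        ≤ F (z, x n) + g (x n) + ⟪z - x n, gradient g (x n)⟫ +
          (1 / (2 * τ)) * ‖z - x n‖ ^ 2) :
    (∀ N : ℕ, ∀ hN : 1 ≤ N,
      (Finset.range N).inf' (Finset.nonempty_range_iff.mpr (by omega))
          (fun n => ‖x (n + 1) - x n‖ ^ 2)
        ≤ (1 / (N : ℝ)) * ((f (x 0) + g (x 0) - hstar) / (1 / (2 * τ) - L / 2))) ∧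
    Filter.Tendsto
      (fun N : ℕ =>
        (Finset.range (N + 1)).inf' (Finset.nonempty_range_iff.mpr (Nat.succ_ne_zero N))
          (fun n => ‖x (n + 1) - x n‖ ^ 2))
      Filter.atTop (nhds 0) := by
  set c : ℝ := 1 / (2 * τ) - L / 2 with hc
  have hcpos : 0 < c := by
    have h2τ : 1 / (2 * τ) > L / 2 := by
      rw [gt_iff_lt, div_lt_div_iff₀ (by norm_num) (by positivity)]
      have := (lt_div_iff₀ hL).mp hτ
      nlinarith
    simpa [hc, sub_pos] using h2τ
  -- per-step decrease
  have hstep : ∀ n : ℕ,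
      c * ‖x (n + 1) - x n‖ ^ 2 ≤ (f (x n) + g (x n)) - (f (x (n + 1)) + g (x (n + 1))) := by
    intro n
    have h1 := hiter n (x n)
    simp only [sub_self, inner_zero_left, norm_zero, hdiag] at h1
    have h2 := descent_lemma g L hg hlip (x n) (x (n + 1))
    have h3 := hmaj (x (n + 1)) (x n)
    have hsym : ⟪x (n + 1) - x n, gradient g (x n)⟫ = ⟪gradient g (x n), x (n + 1) - x n⟫ :=
      real_inner_comm _ _
    rw [hsym] at h1
    simp only [hc]
    nlinarith [h1, h2, h3]
  -- telescoping sum bound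
  have hsum : ∀ N : ℕ,
      c * ∑ n ∈ Finset.range N, ‖x (n + 1) - x n‖ ^ 2
        ≤ (f (x 0) + g (x 0)) - hstar := by
    intro N
    have htel : c * ∑ n ∈ Finset.range N, ‖x (n + 1) - x n‖ ^ 2
        ≤ (f (x 0) + g (x 0)) - (f (x N) + g (x N)) := by
      rw [Finset.mul_sum]
      have : (f (x 0) + g (x 0)) - (f (x N) + g (x N))
          = ∑ n ∈ Finset.range N,
              ((f (x n) + g (x n)) - (f (x (n + 1)) + g (x (n + 1)))) := by
        rw [← Finset.sum_range_sub' (fun n => f (x n) + g (x n))]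
      rw [this]
      exact Finset.sum_le_sum fun n _ => hstep n
    have := hbound (x N)
    linarith
  have hpart1 : ∀ N : ℕ, ∀ hN : 1 ≤ N,
      (Finset.range N).inf' (Finset.nonempty_range_iff.mpr (by omega))
          (fun n => ‖x (n + 1) - x n‖ ^ 2)
        ≤ (1 / (N : ℝ)) * ((f (x 0) + g (x 0) - hstar) / (1 / (2 * τ) - L / 2)) := by
    intro N hN
    have hne : (Finset.range N).Nonempty := Finset.nonempty_range_iff.mpr (by omega)
    set γ := (Finset.range N).inf' hne (fun n => ‖x (n + 1) - x n‖ ^ 2) with hγ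
    have hNγ : (N : ℝ) * γ ≤ ∑ n ∈ Finset.range N, ‖x (n + 1) - x n‖ ^ 2 := by
      calc (N : ℝ) * γ = ∑ _n ∈ Finset.range N, γ := by
            simp [mul_comm]
        _ ≤ _ := Finset.sum_le_sum fun n hn => Finset.inf'_le _ hn
    have h4 : c * ((N : ℝ) * γ) ≤ f (x 0) + g (x 0) - hstar := by
      have := hsum N
      nlinarith [mul_le_mul_of_nonneg_left hNγ hcpos.le]
    have hNpos : (0 : ℝ) < N := by exact_mod_cast hN
    calc γ ≤ (f (x 0) + g (x 0) - hstar) / (c * N) := by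
            rw [le_div_iff₀ (by positivity)]
            nlinarith
      _ = (1 / (N : ℝ)) * ((f (x 0) + g (x 0) - hstar) / (1 / (2 * τ) - L / 2)) := by
            rw [← hc, one_div_mul_eq_div, div_div, mul_comm (1 / (2 * τ) - L / 2) (N : ℝ), ← hc]
  refine ⟨hpart1, ?_⟩
  -- convergence
  have hub : ∀ N : ℕ,
      (Finset.range (N + 1)).inf' (Finset.nonempty_range_iff.mpr (Nat.succ_ne_zero N))
          (fun n => ‖x (n + 1) - x n‖ ^ 2)
        ≤ (1 / ((N : ℝ) + 1)) * ((f (x 0) + g (x 0) - hstar) / (1 / (2 * τ) - L / 2)) := by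
    intro N
    have := hpart1 (N + 1) (by omega)
    simpa using this
  have hlb : ∀ N : ℕ, (0 : ℝ) ≤
      (Finset.range (N + 1)).inf' (Finset.nonempty_range_iff.mpr (Nat.succ_ne_zero N))
          (fun n => ‖x (n + 1) - x n‖ ^ 2) := by
    intro N
    apply Finset.le_inf'
    intro n _
    positivity
  have htend : Filter.Tendsto
      (fun N : ℕ => (1 / ((N : ℝ) + 1)) *
        ((f (x 0) + g (x 0) - hstar) / (1 / (2 * τ) - L / 2)))
      Filter.atTop (nhds 0) := by
    have := tendsto_one_div_add_atTop_nhds_zero_nat.mul_const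
      ((f (x 0) + g (x 0) - hstar) / (1 / (2 * τ) - L / 2))
    simpa using this
  exact tendsto_of_tendsto_of_tendsto_of_le_of_le tendsto_const_nhds htend hlb hub
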